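/- Let Z be the cobipartite augment on cliques X, Y with connecting edge set F, and define W_1(X) = \sum_{v\in X} w(v), W_1(Y) = \sum_{v\in Y} w(v), W_2(Z) = \sum_{uv \notin F, u\in X, v\in Y} w(u)w(v). Let Z' be the 4-vertex gadget on X' = {x_1, x_2}, Y' = {y_1, y_2} with edges x_1x_2, y_1y_2, x_1y_1, x_2y_2 and weights w(x_1)=\rho, w(x_2)=W_1(X)-\rho, w(y_1)=\sigma, w(y_2)=W_1(Y)-\sigma, where 2\sigma < W_1(Y) and \rho = (W_2(Z) - \sigma W_1(X)) / (W_1(Y) - 2\sigma). Then W_1(X') = W_1(X), W_1(Y') = W_1(Y), and the total weight of independent sets of Z' of size 2 equals W_2(Z). -/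
import Mathlib


/-- The gadget replacing a cobipartite augment. `Z = X ∪ Y` is an augment: `X`, `Y` are
cliques with connecting edge set `F ⊆ X × Y`, and nonnegative vertex weights `w`. Writing
`W₁(X) = ∑_{v∈X} w v`, `W₁(Y) = ∑_{v∈Y} w v` and
`W₂(Z) = ∑_{(u,v) ∈ (X×Y)\F} w u * w v`, the gadget `Z'` has vertices `x₁, x₂, y₁, y₂`
with weights `ρ`, `W₁(X) - ρ`, `σ`, `W₁(Y) - σ`, where `2σ < W₁(Y)` and
`ρ = (W₂(Z) - σ·W₁(X))/(W₁(Y) - 2σ)`. Its independent sets of size two are `{x₁,y₂}` and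
`{x₂,y₁}`. Then `W₁(X') = W₁(X)`, `W₁(Y') = W₁(Y)`, and the total weight of independent
sets of size two of `Z'` equals `W₂(Z)`. -/
theorem augment_gadget_equivalent {V : Type*} [DecidableEq V] [Fintype V]
    (w : V → ℚ) (hw : ∀ v, 0 ≤ w v)
    (X Y : Finset V) (hXY : Disjoint X Y)
    (F : Finset (V × V)) (hF : F ⊆ X ×ˢ Y)
    (σ ρ : ℚ) (hσ : 0 ≤ σ)
    (hσY : 2 * σ < ∑ v ∈ Y, w v)
    (hρ : ρ = ((∑ p ∈ (X ×ˢ Y).filter (fun p => p ∉ F), w p.1 * w p.2) -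
        σ * ∑ v ∈ X, w v) / ((∑ v ∈ Y, w v) - 2 * σ)) :
    ρ + ((∑ v ∈ X, w v) - ρ) = ∑ v ∈ X, w v ∧
    σ + ((∑ v ∈ Y, w v) - σ) = ∑ v ∈ Y, w v ∧
    ρ * ((∑ v ∈ Y, w v) - σ) + ((∑ v ∈ X, w v) - ρ) * σ =
      ∑ p ∈ (X ×ˢ Y).filter (fun p => p ∉ F), w p.1 * w p.2 := by
  refine ⟨by ring, by ring, ?_⟩
  have h : (∑ v ∈ Y, w v) - 2 * σ ≠ 0 := by linarith
  have : ρ * ((∑ v ∈ Y, w v) - 2 * σ) =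
      (∑ p ∈ (X ×ˢ Y).filter (fun p => p ∉ F), w p.1 * w p.2) - σ * ∑ v ∈ X, w v := by
    rw [hρ, div_mul_cancel₀ _ h]
  linarith [this]
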